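/- In the four-state protocol of Algorithm 2, let a configuration C be reachable from the all-r^ω initial configuration on n agents. If n is even and #token = 0 in C, then #red = #blue = n/2 in C, where red agents are those in state r^ω or r and blue agents are those in state b^ω or b. -/
import Mathlib


/-- States of the four-state protocol: r^ω, b^ω, r, b. -/
inductive St : Type
  | rw | bw | r | b
deriving DecidableEq

/-- Deterministic transition function of the protocol. -/
def delta : St → St → St × St
  | .rw, .rw => (.r, .b)
  | .rw, .bw => (.b, .b)
  | .bw, .rw => (.b, .b)
  | .rw, .r  => (.r, .rw)
  | .r,  .rw => (.rw, .r)
  | .bw, .b  => (.b, .bw)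
  | .b,  .bw => (.bw, .b)
  | .rw, .b  => (.r, .bw)
  | .b,  .rw => (.bw, .r)
  | .bw, .r  => (.b, .rw)
  | .r,  .bw => (.rw, .b)
  | p, q     => (p, q)

/-- One step: apply the rule to an ordered pair of distinct agents. -/
def Step {n : ℕ} (C C' : Fin n → St) : Prop :=
  ∃ i j : Fin n, i ≠ j ∧
    C' = Function.update (Function.update C i (delta (C i) (C j)).1) j
          (delta (C i) (C j)).2

/-- Number of agents in state `s`. -/
def cnt {n : ℕ} (C : Fin n → St) (s : St) : ℕ :=
  (Finset.univ.filter fun a => C a = s).card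

/-- Number of token-holding agents (state r^ω or b^ω). -/
def tokens {n : ℕ} (C : Fin n → St) : ℕ := cnt C .rw + cnt C .bw

/-- Number of red agents (state r^ω or r). -/
def reds {n : ℕ} (C : Fin n → St) : ℕ := cnt C .rw + cnt C .r

/-- Number of blue agents (state b^ω or b). -/
def blues {n : ℕ} (C : Fin n → St) : ℕ := cnt C .bw + cnt C .b

/-- Color of a state: `true` = red, `false` = blue. -/
def isRed : St → Bool
  | .rw => true
  | .r  => true
  | .bw => false
  | .b  => false

instance : Fintype St :=
  ⟨{St.rw, St.bw, St.r, St.b}, by intro x; cases x <;> simp⟩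

/-- Integer weight of a state. -/
def wt : St → ℤ
  | .rw => 0
  | .bw => -2
  | .r  => 1
  | .b  => -1

lemma delta_wt (p q : St) : wt (delta p q).1 + wt (delta p q).2 = wt p + wt q := by
  cases p <;> cases q <;> rfl

lemma sum_split {n : ℕ} (i j : Fin n) (hij : i ≠ j) (f : Fin n → ℤ) :
    ∑ a, f a = f i + f j + ∑ a ∈ (Finset.univ \ {i, j}), f a := by
  have h := Finset.sum_sdiff (f := f) (Finset.subset_univ ({i, j} : Finset (Fin n)))
  rw [Finset.sum_pair hij] at h
  linarith

lemma wt_step {n : ℕ} {C C' : Fin n → St} (h : Step C C') :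
    ∑ a, wt (C' a) = ∑ a, wt (C a) := by
  obtain ⟨i, j, hij, rfl⟩ := h
  set D := Function.update (Function.update C i (delta (C i) (C j)).1) j
      (delta (C i) (C j)).2 with hD
  have hDi : D i = (delta (C i) (C j)).1 := by
    rw [hD, Function.update_of_ne hij, Function.update_self]
  have hDj : D j = (delta (C i) (C j)).2 := by
    rw [hD, Function.update_self]
  have hother : ∀ a, a ≠ i → a ≠ j → D a = C a := by
    intro a hai haj
    rw [hD, Function.update_of_ne haj, Function.update_of_ne hai]
  rw [sum_split i j hij (fun a => wt (D a)), sum_split i j hij (fun a => wt (C a))]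
  have hrest : ∑ a ∈ (Finset.univ \ {i, j}), wt (D a)
      = ∑ a ∈ (Finset.univ \ {i, j}), wt (C a) := by
    apply Finset.sum_congr rfl
    intro a ha
    simp only [Finset.mem_sdiff, Finset.mem_insert, Finset.mem_singleton] at ha
    rw [hother a (fun h => ha.2 (Or.inl h)) (fun h => ha.2 (Or.inr h))]
  rw [hDi, hDj, hrest, delta_wt]

lemma wt_reach {n : ℕ} {C : Fin n → St}
    (h : Relation.ReflTransGen Step (fun _ => St.rw) C) :
    ∑ a, wt (C a) = 0 := by
  induction h with
  | refl => simp [wt]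
  | tail _ hstep ih => rw [wt_step hstep, ih]

lemma sum_eq_cnt {n : ℕ} (C : Fin n → St) (f : St → ℤ) :
    ∑ a, f (C a) = ∑ s : St, (cnt C s : ℤ) * f s := by
  rw [← Finset.sum_fiberwise (s := Finset.univ) (g := C) (f := fun a => f (C a))]
  apply Finset.sum_congr rfl
  intro s _
  have h1 : ∑ a ∈ Finset.univ.filter (fun a => C a = s), f (C a)
      = ∑ _a ∈ Finset.univ.filter (fun a => C a = s), f s := by
    apply Finset.sum_congr rfl
    intro a ha
    simp only [Finset.mem_filter] at ha
    rw [ha.2]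
  rw [h1, Finset.sum_const, cnt]
  push_cast [Nat.cast_id]
  ring

lemma sum_St (f : St → ℤ) :
    ∑ s : St, f s = f .rw + f .bw + f .r + f .b := by
  rw [show (Finset.univ : Finset St) = {St.rw, St.bw, St.r, St.b} from rfl,
    Finset.sum_insert (by decide), Finset.sum_insert (by decide),
    Finset.sum_insert (by decide), Finset.sum_singleton]; ring

lemma cnt_total {n : ℕ} (C : Fin n → St) :
    cnt C .rw + cnt C .bw + cnt C .r + cnt C .b = n := by
  have h := Finset.card_eq_sum_card_fiberwise
    (s := (Finset.univ : Finset (Fin n))) (t := (Finset.univ : Finset St)) (f := C)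
    (fun x _ => Finset.mem_univ _)
  have h2 : ∑ s : St, (cnt C s : ℤ) = (n : ℤ) := by
    have : ∑ s : St, cnt C s = n := by simpa [cnt] using h.symm
    exact_mod_cast congrArg (Nat.cast (R := ℤ)) this
  rw [sum_St (fun s => (cnt C s : ℤ))] at h2
  exact_mod_cast h2

theorem stmt3 (n : ℕ) (C : Fin n → St)
    (hreach : Relation.ReflTransGen Step (fun _ => St.rw) C)
    (heven : Even n) (htok : tokens C = 0) :
    reds C = n / 2 ∧ blues C = n / 2 := by
  have hw := wt_reach hreach
  rw [sum_eq_cnt C wt, sum_St (fun s => (cnt C s : ℤ) * wt s)] at hw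
  simp only [wt] at hw
  have htot := cnt_total C
  have hrw : cnt C St.rw = 0 := by unfold tokens at htok; omega
  have hbw : cnt C St.bw = 0 := by unfold tokens at htok; omega
  rw [hrw, hbw] at hw htot
  have hrb : cnt C St.r = cnt C St.b := by push_cast at hw; omega
  unfold reds blues
  omega
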